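/- (Corollary 8) Let Σ be a finite d-dimensional simplicial complex (d ≥ 1) with β_d(Σ) = 0 such that the space Z_{d−1}(Σ^{(−1)}) of Z_2 (d−1)-cycles of the (d−1)-skeleton Σ^{(−1)} admits a 2-complete basis (by Theorem 2 of the paper, this holds whenever Σ is PL embeddable into ℝ^{d}). Then (d+1)·(f_d(Σ) + 1) ≤ 2·f_{d−1}(Σ). -/

import Mathlib

open Finset

/-- A finite simplicial complex on a finite vertex type `V`:
a finite nonempty collection of nonempty finite sets (faces)
closed under taking nonempty subsets. -/
structure SComplex (V : Type) [DecidableEq V] [Fintype V] where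
  faces : Finset (Finset V)
  nonempty : faces.Nonempty
  no_empty : ∀ σ ∈ faces, σ ≠ ∅
  down_closed : ∀ σ ∈ faces, ∀ τ, τ ⊆ σ → τ ≠ ∅ → τ ∈ faces

namespace SComplex

variable {V : Type} [DecidableEq V] [Fintype V]

/-- The set of faces of dimension `i` (i.e. of cardinality `i+1`). -/
def facesDim (K : SComplex V) (i : ℕ) : Finset (Finset V) :=
  K.faces.filter (fun σ => σ.card = i + 1)

/-- `fnum K i` is the face number `f_i`. -/
def fnum (K : SComplex V) (i : ℕ) : ℕ := (K.facesDim i).card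

/-- The space of `Z_2` `i`-chains: functions from the `i`-faces to `Z_2`. -/
abbrev Chains (K : SComplex V) (i : ℕ) : Type := {σ // σ ∈ K.facesDim i} → ZMod 2

/-- The boundary map `∂_i : C_i → C_{i-1}` (and `∂_0 = 0`): the value of `∂ c` on an
`(i-1)`-face `τ` is the sum over `i`-faces `σ ⊇ τ` of `c σ`. -/
def boundary (K : SComplex V) (i : ℕ) : Chains K i →ₗ[ZMod 2] Chains K (i - 1) :=
  if i = 0 then 0 else
  { toFun := fun c τ =>
      ∑ σ : {σ // σ ∈ K.facesDim i}, if (τ : Finset V) ⊆ (σ : Finset V) then c σ else 0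
    map_add' := by
      intro c d
      funext τ
      show (∑ σ : {σ // σ ∈ K.facesDim i}, _) = _
      rw [Pi.add_apply, ← Finset.sum_add_distrib]
      apply Finset.sum_congr rfl
      intro σ _
      by_cases h : (τ : Finset V) ⊆ (σ : Finset V) <;> simp [h]
    map_smul' := by
      intro a c
      funext τ
      show (∑ σ : {σ // σ ∈ K.facesDim i}, _) = _
      rw [RingHom.id_apply, Pi.smul_apply, smul_eq_mul, Finset.mul_sum]
      apply Finset.sum_congr rfl
      intro σ _
      by_cases h : (τ : Finset V) ⊆ (σ : Finset V) <;> simp [h] }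

/-- The `i`-th `Z_2` Betti number: `dim ker ∂_i − rank ∂_{i+1}`. -/
noncomputable def betti (K : SComplex V) (i : ℕ) : ℕ :=
  Module.finrank (ZMod 2) (LinearMap.ker (K.boundary i)) -
    Module.finrank (ZMod 2) (LinearMap.range (K.boundary (i + 1)))

/-- The number of `i`-faces in the support of a chain. -/
def suppCard {K : SComplex V} {i : ℕ} (c : Chains K i) : ℕ :=
  (Finset.univ.filter (fun σ => c σ ≠ 0)).card

/-- The girth: the minimal support size of a nonzero `d`-cycle. -/
noncomputable def girth (K : SComplex V) (d : ℕ) : ℕ :=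
  sInf {n | ∃ c : Chains K d, c ∈ LinearMap.ker (K.boundary d) ∧ c ≠ 0 ∧ suppCard c = n}

/-- `Z_d(K)` admits an `m`-complete basis: a basis of the space of `d`-cycles such that every
`d`-face lies in the support of at most `m` basis elements. -/
def HasCompleteBasis (K : SComplex V) (d m : ℕ) : Prop :=
  ∃ (ι : Type) (_ : Fintype ι) (b : Module.Basis ι (ZMod 2) (LinearMap.ker (K.boundary d))),
    ∀ σ : {σ // σ ∈ K.facesDim d},
      (Finset.univ.filter (fun i : ι => (b i).1 σ ≠ 0)).card ≤ m

/-- `K` is `d`-dimensional: `d` is the maximal dimension of a face. -/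
def IsDim (K : SComplex V) (d : ℕ) : Prop :=
  (∀ σ ∈ K.faces, σ.card ≤ d + 1) ∧ ∃ σ ∈ K.faces, σ.card = d + 1

/-- `K` is pure `d`-dimensional: every face is contained in a `d`-face. -/
def IsPure (K : SComplex V) (d : ℕ) : Prop :=
  ∀ σ ∈ K.faces, ∃ τ ∈ K.faces, σ ⊆ τ ∧ τ.card = d + 1

/-- A `d`-dimensional complex is balanced if its vertices can be colored with `d+1` colors
so that the coloring is injective on every face. -/
def IsBalanced (K : SComplex V) (d : ℕ) : Prop :=
  ∃ coloring : V → Fin (d + 1), ∀ σ ∈ K.faces, Set.InjOn coloring (σ : Set V)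

/-- The `d`-skeleton of `K`: all faces of dimension at most `d`. -/
def skeleton (K : SComplex V) (d : ℕ) : SComplex V where
  faces := K.faces.filter (fun σ => σ.card ≤ d + 1)
  nonempty := by
    obtain ⟨σ, hσ⟩ := K.nonempty
    obtain ⟨v, hv⟩ := Finset.nonempty_iff_ne_empty.mpr (K.no_empty σ hσ)
    refine ⟨{v}, Finset.mem_filter.mpr ⟨K.down_closed σ hσ {v}
      (Finset.singleton_subset_iff.mpr hv) (Finset.singleton_ne_empty v), by simp⟩⟩
  no_empty := by
    intro σ hσ
    exact K.no_empty σ (Finset.mem_filter.mp hσ).1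
  down_closed := by
    intro σ hσ τ hτσ hτ
    rw [Finset.mem_filter] at hσ ⊢
    exact ⟨K.down_closed σ hσ.1 τ hτσ hτ, le_trans (Finset.card_le_card hτσ) hσ.2⟩

lemma boundary_apply (K : SComplex V) {i : ℕ} (hi : i ≠ 0) (c : Chains K i)
    (τ : {σ // σ ∈ K.facesDim (i - 1)}) :
    K.boundary i c τ =
      ∑ σ : {σ // σ ∈ K.facesDim i}, if (τ : Finset V) ⊆ (σ : Finset V) then c σ else 0 := by
  rw [boundary, if_neg hi]; rfl

lemma mem_facesDim {K : SComplex V} {i : ℕ} {σ : Finset V} :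
    σ ∈ K.facesDim i ↔ σ ∈ K.faces ∧ σ.card = i + 1 := Finset.mem_filter

lemma skeleton_facesDim (K : SComplex V) (d : ℕ) :
    (K.skeleton d).facesDim d = K.facesDim d := by
  ext σ
  constructor
  · intro h
    have h1 := Finset.mem_filter.mp h
    exact Finset.mem_filter.mpr ⟨(Finset.mem_filter.mp h1.1).1, h1.2⟩
  · intro h
    have h1 := Finset.mem_filter.mp h
    exact Finset.mem_filter.mpr ⟨Finset.mem_filter.mpr ⟨h1.1, le_of_eq h1.2⟩, h1.2⟩

lemma cycle_supp_lower {L : SComplex V} {e : ℕ} (he : 1 ≤ e) {c : Chains L e}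
    (hc : L.boundary e c = 0) (hne : c ≠ 0) : e + 2 ≤ suppCard c := by
  obtain ⟨σ, hσ⟩ : ∃ σ, c σ ≠ 0 := Function.ne_iff.mp hne
  have hσf : σ.1 ∈ L.faces ∧ σ.1.card = e + 1 := mem_facesDim.mp σ.2
  have key : ∀ v, v ∈ σ.1 → ∃ ρ : {σ' // σ' ∈ L.facesDim e},
      ρ ≠ σ ∧ c ρ ≠ 0 ∧ σ.1.erase v ⊆ ρ.1 := by
    intro v hv
    have hτcard : (σ.1.erase v).card = e := by
      rw [Finset.card_erase_of_mem hv, hσf.2]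
      omega
    have hτmem : σ.1.erase v ∈ L.facesDim (e - 1) := by
      refine mem_facesDim.mpr ⟨L.down_closed σ.1 hσf.1 _ (Finset.erase_subset v σ.1) ?_, by omega⟩
      intro h
      rw [h] at hτcard
      simp at hτcard; omega
    by_contra hcon
    push_neg at hcon
    have h0 := congrFun hc ⟨_, hτmem⟩
    rw [boundary_apply L (by omega)] at h0
    have hsum : (∑ ρ : {σ' // σ' ∈ L.facesDim e},
        if σ.1.erase v ⊆ ρ.1 then c ρ else 0) = c σ := by
      rw [Finset.sum_eq_single σ]
      · rw [if_pos (Finset.erase_subset v σ.1)]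
      · intro ρ _ hρ
        by_cases hsub : σ.1.erase v ⊆ ρ.1
        · rw [if_pos hsub]
          by_contra hcρ
          exact (hcon ρ hρ hcρ) hsub
        · rw [if_neg hsub]
      · intro h; exact absurd (Finset.mem_univ σ) h
    rw [hsum] at h0
    exact hσ h0
  set f : V → {σ' // σ' ∈ L.facesDim e} :=
    fun v => if h : v ∈ σ.1 then (key v h).choose else σ with hf
  have hfspec : ∀ v (h : v ∈ σ.1), f v ≠ σ ∧ c (f v) ≠ 0 ∧ σ.1.erase v ⊆ (f v).1 := by
    intro v h
    rw [hf]; simp only [dif_pos h]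
    exact (key v h).choose_spec
  have hmaps : ∀ v ∈ σ.1, f v ∈ (Finset.univ.filter (fun ρ => c ρ ≠ 0)).erase σ := by
    intro v hv
    obtain ⟨h1, h2, _⟩ := hfspec v hv
    exact Finset.mem_erase.mpr ⟨h1, Finset.mem_filter.mpr ⟨Finset.mem_univ _, h2⟩⟩
  have hinj : Set.InjOn f σ.1 := by
    intro v hv w hw hvw
    by_contra hne'
    obtain ⟨hρ1, _, hρ3v⟩ := hfspec v hv
    obtain ⟨_, _, hρ3w⟩ := hfspec w hw
    have hsub : σ.1 ⊆ (f v).1 := by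
      intro x hx
      by_cases hxv : x = v
      · subst hxv
        rw [hvw]
        exact hρ3w (Finset.mem_erase.mpr ⟨hne', hx⟩)
      · exact hρ3v (Finset.mem_erase.mpr ⟨hxv, hx⟩)
    have hcard : (f v).1.card = e + 1 := (mem_facesDim.mp (f v).2).2
    have : σ.1 = (f v).1 :=
      Finset.eq_of_subset_of_card_le hsub (le_of_eq (by rw [hcard, hσf.2]))
    exact hρ1 (Subtype.ext this.symm)
  have hle := Finset.card_le_card_of_injOn f hmaps hinj
  have hσmem : σ ∈ Finset.univ.filter (fun ρ => c ρ ≠ 0) :=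
    Finset.mem_filter.mpr ⟨Finset.mem_univ _, hσ⟩
  rw [Finset.card_erase_of_mem hσmem] at hle
  have hpos : 0 < (Finset.univ.filter (fun ρ => c ρ ≠ 0)).card :=
    Finset.card_pos.mpr ⟨σ, hσmem⟩
  unfold suppCard
  omega

lemma ker_top_eq_bot (K : SComplex V) {d : ℕ} (hdim : K.IsDim d) (hβ : K.betti d = 0) :
    LinearMap.ker (K.boundary d) = ⊥ := by
  have hempty : K.facesDim (d + 1) = ∅ := by
    rw [Finset.eq_empty_iff_forall_notMem]
    intro σ hσ
    obtain ⟨h1, h2⟩ := mem_facesDim.mp hσ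
    have := hdim.1 σ h1
    omega
  have hzero : K.boundary (d + 1) = 0 := by
    apply LinearMap.ext
    intro c
    have hc : c = 0 := by
      funext σ
      exact absurd σ.2 (Finset.eq_empty_iff_forall_notMem.mp hempty σ.1)
    rw [hc, map_zero]
    simp
  have hrange : LinearMap.range (K.boundary (d + 1)) = ⊥ := by
    rw [hzero]; exact LinearMap.range_zero
  unfold betti at hβ
  rw [hrange, finrank_bot] at hβ
  exact Submodule.finrank_eq_zero.mp (by omega)

lemma fd_le_rank (K : SComplex V) {d : ℕ} (hd : 1 ≤ d)
    (hker : LinearMap.ker (K.boundary d) = ⊥) :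
    K.fnum d ≤ Module.finrank (ZMod 2)
      (LinearMap.ker ((K.skeleton (d - 1)).boundary (d - 1))) := by
  set S := K.skeleton (d - 1) with hS
  have hiff : ∀ σ : Finset V, σ ∈ S.facesDim (d - 1) ↔ σ ∈ K.facesDim (d - 1) := by
    intro σ; rw [hS, skeleton_facesDim]
  set e : {σ // σ ∈ S.facesDim (d - 1)} ≃ {σ // σ ∈ K.facesDim (d - 1)} :=
    Equiv.subtypeEquivRight hiff with he
  set E : Chains K (d - 1) ≃ₗ[ZMod 2] Chains S (d - 1) :=
    LinearEquiv.funCongrLeft (ZMod 2) (ZMod 2) e with hE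
  set Φ : Chains K d →ₗ[ZMod 2] Chains S (d - 1) := E.toLinearMap ∘ₗ K.boundary d with hΦ
  have hΦapply : ∀ (c : Chains K d) (ρ : {σ // σ ∈ S.facesDim (d - 1)}),
      Φ c ρ = ∑ σ : {σ // σ ∈ K.facesDim d},
        if (ρ : Finset V) ⊆ (σ : Finset V) then c σ else 0 := by
    intro c ρ
    have h1 : Φ c ρ = (K.boundary d c) (e ρ) := rfl
    rw [h1, boundary_apply K (by omega)]
    apply Finset.sum_congr rfl
    intro σ _
    rfl
  have hmem : ∀ c, Φ c ∈ LinearMap.ker (S.boundary (d - 1)) := by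
    intro c
    rw [LinearMap.mem_ker]
    by_cases hd1 : d = 1
    · subst hd1
      show S.boundary 0 _ = 0
      rw [boundary]
      simp
    · have hd2 : 2 ≤ d := by omega
      funext τ
      rw [boundary_apply S (by omega)]
      have hτc : (τ : Finset V).card = d - 1 := by
        have := (mem_facesDim.mp τ.2).2; omega
      have hterm : ∀ ρ : {σ // σ ∈ S.facesDim (d - 1)},
          (if (τ : Finset V) ⊆ (ρ : Finset V) then Φ c ρ else 0)
          = ∑ σ : {σ // σ ∈ K.facesDim d},
              if (τ : Finset V) ⊆ ρ.1 ∧ ρ.1 ⊆ σ.1 then c σ else 0 := by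
        intro ρ
        by_cases h : (τ : Finset V) ⊆ ρ.1
        · rw [if_pos h, hΦapply]
          apply Finset.sum_congr rfl
          intro σ _
          by_cases h2 : ρ.1 ⊆ σ.1 <;> simp [h, h2]
        · rw [if_neg h]
          symm
          apply Finset.sum_eq_zero
          intro σ _
          rw [if_neg (by tauto)]
      rw [Finset.sum_congr rfl (fun ρ _ => hterm ρ), Finset.sum_comm]
      apply Finset.sum_eq_zero
      intro σ _
      have hσf : σ.1 ∈ K.faces ∧ σ.1.card = d + 1 := mem_facesDim.mp σ.2
      have hrw : (∑ ρ : {σ' // σ' ∈ S.facesDim (d - 1)},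
          if (τ : Finset V) ⊆ ρ.1 ∧ ρ.1 ⊆ σ.1 then c σ else 0)
          = ∑ ρ ∈ S.facesDim (d - 1),
              if (τ : Finset V) ⊆ ρ ∧ ρ ⊆ σ.1 then c σ else 0 :=
        Finset.sum_coe_sort (S.facesDim (d - 1))
          (fun ρ => if (τ : Finset V) ⊆ ρ ∧ ρ ⊆ σ.1 then c σ else 0)
      rw [hrw, Finset.sum_ite, Finset.sum_const, Finset.sum_const_zero, add_zero]
      have hcard : ((S.facesDim (d - 1)).filter
          (fun ρ => (τ : Finset V) ⊆ ρ ∧ ρ ⊆ σ.1)).card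
          = if (τ : Finset V) ⊆ σ.1 then 2 else 0 := by
        by_cases hts : (τ : Finset V) ⊆ σ.1
        · rw [if_pos hts]
          have hbij : (σ.1 \ (τ : Finset V)).card = ((S.facesDim (d - 1)).filter
              (fun ρ => (τ : Finset V) ⊆ ρ ∧ ρ ⊆ σ.1)).card := by
            refine Finset.card_bij (fun v _ => σ.1.erase v) ?_ ?_ ?_
            · intro v hv
              have hv1 := Finset.mem_sdiff.mp hv
              have hcarde : (σ.1.erase v).card = d := by
                rw [Finset.card_erase_of_mem hv1.1, hσf.2]; omega
              have hmem' : σ.1.erase v ∈ S.facesDim (d - 1) := by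
                refine mem_facesDim.mpr ⟨?_, by omega⟩
                refine Finset.mem_filter.mpr ⟨K.down_closed σ.1 hσf.1 _
                  (Finset.erase_subset v σ.1) ?_, by omega⟩
                intro hemp
                rw [hemp] at hcarde
                simp at hcarde; omega
              refine Finset.mem_filter.mpr ⟨hmem', ?_, Finset.erase_subset v σ.1⟩
              intro x hx
              exact Finset.mem_erase.mpr ⟨fun hxv => hv1.2 (hxv ▸ hx), hts hx⟩
            · intro a ha b hb hab
              by_contra hne'
              have haσ := (Finset.mem_sdiff.mp ha).1
              have h1 : σ.1.erase a = σ.1.erase b := hab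
              have : a ∈ σ.1.erase b := Finset.mem_erase.mpr ⟨hne', haσ⟩
              rw [← h1] at this
              exact Finset.notMem_erase a σ.1 this
            · intro ρ hρ
              obtain ⟨hρm, h1, h2⟩ := Finset.mem_filter.mp hρ
              have hρc : ρ.card = d := by
                have := (mem_facesDim.mp hρm).2; omega
              have hsd : (σ.1 \ ρ).card = 1 := by
                rw [Finset.card_sdiff_of_subset h2, hσf.2, hρc]; omega
              obtain ⟨v, hv⟩ := Finset.card_eq_one.mp hsd
              have hvmem : v ∈ σ.1 \ ρ := by
                rw [hv]; exact Finset.mem_singleton_self v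
              have hv1 := Finset.mem_sdiff.mp hvmem
              refine ⟨v, Finset.mem_sdiff.mpr ⟨hv1.1, fun hvτ => hv1.2 (h1 hvτ)⟩, ?_⟩
              have hsub : ρ ⊆ σ.1.erase v := fun x hx =>
                Finset.mem_erase.mpr ⟨fun hxv => hv1.2 (hxv ▸ hx), h2 hx⟩
              refine (Finset.eq_of_subset_of_card_le hsub (le_of_eq ?_)).symm
              rw [Finset.card_erase_of_mem hv1.1, hσf.2, hρc]; omega
          rw [← hbij, Finset.card_sdiff_of_subset hts, hσf.2, hτc]
          omega
        · rw [if_neg hts]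
          rw [Finset.card_eq_zero, Finset.filter_eq_empty_iff]
          rintro ρ - ⟨h1, h2⟩
          exact hts (h1.trans h2)
      rw [hcard]
      by_cases hts : (τ : Finset V) ⊆ σ.1
      · rw [if_pos hts, two_nsmul]
        exact CharTwo.add_self_eq_zero _
      · rw [if_neg hts, zero_smul]
  have hinj : Function.Injective Φ := by
    intro a b hab
    have h1 : K.boundary d a = K.boundary d b := E.injective hab
    have h2 : a - b ∈ LinearMap.ker (K.boundary d) := by
      rw [LinearMap.mem_ker, map_sub, h1, sub_self]
    rw [hker, Submodule.mem_bot, sub_eq_zero] at h2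
    exact h2
  set Φ' : Chains K d →ₗ[ZMod 2] ↥(LinearMap.ker (S.boundary (d - 1))) :=
    Φ.codRestrict _ hmem with hΦ'
  have hinj' : Function.Injective Φ' := by
    intro a b hab
    exact hinj (congrArg Subtype.val hab)
  have hle := LinearMap.finrank_le_finrank_of_injective hinj'
  have heq : Module.finrank (ZMod 2) (Chains K d) = K.fnum d := by
    rw [Module.finrank_pi (ZMod 2), fnum, Fintype.card_coe]
  rw [heq] at hle
  exact hle

lemma case_d1 (K : SComplex V) (hker : LinearMap.ker (K.boundary 1) = ⊥) :
    K.fnum 1 + 1 ≤ K.fnum 0 := by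
  set φ : Chains K 0 →ₗ[ZMod 2] ZMod 2 :=
    { toFun := fun c => ∑ τ : {σ // σ ∈ K.facesDim 0}, c τ
      map_add' := by intro c d; exact Finset.sum_add_distrib
      map_smul' := by intro a c; simp [Finset.mul_sum] } with hφ
  have hcomp : ∀ c : Chains K 1, φ (K.boundary 1 c) = 0 := by
    intro c
    show (∑ τ : {σ // σ ∈ K.facesDim 0}, K.boundary 1 c τ) = 0
    have hterm : ∀ τ : {σ // σ ∈ K.facesDim 0},
        K.boundary 1 c τ = ∑ σ : {σ // σ ∈ K.facesDim 1},
          if (τ : Finset V) ⊆ (σ : Finset V) then c σ else 0 :=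
      fun τ => boundary_apply K one_ne_zero c τ
    rw [Finset.sum_congr rfl (fun τ _ => hterm τ), Finset.sum_comm]
    apply Finset.sum_eq_zero
    intro σ _
    have hσf : σ.1 ∈ K.faces ∧ σ.1.card = 2 := mem_facesDim.mp σ.2
    have hrw : (∑ τ : {σ' // σ' ∈ K.facesDim 0},
        if (τ : Finset V) ⊆ σ.1 then c σ else 0)
        = ∑ t ∈ K.facesDim 0, if t ⊆ σ.1 then c σ else 0 :=
      Finset.sum_coe_sort (K.facesDim 0) (fun t => if t ⊆ σ.1 then c σ else 0)
    rw [hrw, Finset.sum_ite, Finset.sum_const, Finset.sum_const_zero, add_zero]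
    have hcard : ((K.facesDim 0).filter (fun t => t ⊆ σ.1)).card = 2 := by
      have hbij : σ.1.card = ((K.facesDim 0).filter (fun t => t ⊆ σ.1)).card := by
        refine Finset.card_bij (fun v _ => {v}) ?_ ?_ ?_
        · intro v hv
          refine Finset.mem_filter.mpr ⟨mem_facesDim.mpr ⟨K.down_closed σ.1 hσf.1 {v}
            (Finset.singleton_subset_iff.mpr hv) (Finset.singleton_ne_empty v), by simp⟩,
            Finset.singleton_subset_iff.mpr hv⟩
        · intro a _ b _ hab
          exact Finset.singleton_injective hab
        · intro t ht
          obtain ⟨htm, hts⟩ := Finset.mem_filter.mp ht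
          have : t.card = 1 := (mem_facesDim.mp htm).2
          obtain ⟨v, hv⟩ := Finset.card_eq_one.mp this
          exact ⟨v, Finset.singleton_subset_iff.mp (hv ▸ hts), hv.symm⟩
      rw [← hbij, hσf.2]
    rw [hcard, two_nsmul]
    exact CharTwo.add_self_eq_zero _
  have hrange : LinearMap.range (K.boundary 1) ≤ LinearMap.ker φ := by
    rintro x ⟨c, rfl⟩
    exact LinearMap.mem_ker.mpr (hcomp c)
  have hrank1 : Module.finrank (ZMod 2) (LinearMap.range (K.boundary 1)) = K.fnum 1 := by
    have h := LinearMap.finrank_range_add_finrank_ker (K.boundary 1)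
    rw [hker, finrank_bot, add_zero] at h
    rw [h, Module.finrank_pi (ZMod 2), fnum, Fintype.card_coe]
  -- φ is surjective
  obtain ⟨σ0, hσ0⟩ := K.nonempty
  obtain ⟨v0, hv0⟩ := Finset.nonempty_iff_ne_empty.mpr (K.no_empty σ0 hσ0)
  have ht0 : ({v0} : Finset V) ∈ K.facesDim 0 :=
    mem_facesDim.mpr ⟨K.down_closed σ0 hσ0 {v0}
      (Finset.singleton_subset_iff.mpr hv0) (Finset.singleton_ne_empty v0), by simp⟩
  have hφ1 : φ (Pi.single (⟨{v0}, ht0⟩ : {σ // σ ∈ K.facesDim 0}) (1 : ZMod 2)) = 1 := by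
    show (∑ τ : {σ // σ ∈ K.facesDim 0}, Pi.single (⟨{v0}, ht0⟩ : {σ // σ ∈ K.facesDim 0})
      (1 : ZMod 2) τ) = 1
    rw [Finset.sum_pi_single']
    simp
  have hsurj : Function.Surjective φ := by
    intro y
    refine ⟨y • Pi.single (⟨{v0}, ht0⟩ : {σ // σ ∈ K.facesDim 0}) (1 : ZMod 2), ?_⟩
    rw [map_smul, hφ1, smul_eq_mul, mul_one]
  have hrangeφ : Module.finrank (ZMod 2) (LinearMap.range φ) = 1 := by
    rw [LinearMap.range_eq_top.mpr hsurj, finrank_top, Module.finrank_self]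
  have hkerφ := LinearMap.finrank_range_add_finrank_ker φ
  rw [hrangeφ, Module.finrank_pi (ZMod 2), Fintype.card_coe] at hkerφ
  have hmono := Submodule.finrank_mono hrange
  rw [hrank1] at hmono
  have hf0 : (K.facesDim 0).card = K.fnum 0 := rfl
  rw [hf0] at hkerφ
  rw [← hkerφ, Nat.add_comm 1]
  exact Nat.add_le_add_right hmono 1

lemma main_count (L : SComplex V) (e : ℕ) (he : 1 ≤ e) (ι : Type) [hFι : Fintype ι]
    (b : Module.Basis ι (ZMod 2) (LinearMap.ker (L.boundary e)))
    (hb2 : ∀ σ : {σ // σ ∈ L.facesDim e},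
      (Finset.univ.filter (fun i : ι => (b i).1 σ ≠ 0)).card ≤ 2)
    (hfr : 1 ≤ Module.finrank (ZMod 2) (LinearMap.ker (L.boundary e))) :
    (e + 2) * (Module.finrank (ZMod 2) (LinearMap.ker (L.boundary e)) + 1)
      ≤ 2 * L.fnum e := by
  have hcardι : Fintype.card ι = Module.finrank (ZMod 2) (LinearMap.ker (L.boundary e)) :=
    (Module.finrank_eq_card_basis b).symm
  -- each basis element has support at least e+2
  have hsupp : ∀ i : ι, e + 2 ≤ suppCard ((b i).1) := by
    intro i
    have h1 : L.boundary e ((b i).1) = 0 := LinearMap.mem_ker.mp (b i).2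
    have h2 : ((b i).1) ≠ 0 := fun h => Module.Basis.ne_zero b i (ZeroMemClass.coe_eq_zero.mp h)
    exact cycle_supp_lower he h1 h2
  have hι0 : Nonempty ι := Fintype.card_pos_iff.mp (by omega)
  -- the sum of the basis is a nonzero cycle
  set s : ↥(LinearMap.ker (L.boundary e)) := ∑ i : ι, b i with hs
  have hsne : s ≠ 0 := by
    intro h
    obtain ⟨i0⟩ := hι0
    have h1 := congrArg (fun z => (b.repr z) i0) h
    simp only [hs, map_sum, Module.Basis.repr_self, map_zero, Finsupp.zero_apply] at h1
    rw [Finsupp.finset_sum_apply] at h1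
    simp [Finsupp.single_apply] at h1
  have hcyc_s : L.boundary e (s.1) = 0 := LinearMap.mem_ker.mp s.2
  have hsne' : (s.1) ≠ 0 := fun h => hsne (ZeroMemClass.coe_eq_zero.mp h)
  have hsupps : e + 2 ≤ suppCard (s.1) := cycle_supp_lower he hcyc_s hsne'
  -- faces in the support of s are covered exactly once
  have hsval : ∀ τ : {σ // σ ∈ L.facesDim e}, s.1 τ = ∑ i : ι, (b i).1 τ := by
    intro τ
    rw [hs, AddSubmonoidClass.coe_finset_sum, Finset.sum_apply]
  have hcov1 : ∀ τ : {σ // σ ∈ L.facesDim e},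
      s.1 τ ≠ 0 → (Finset.univ.filter (fun i : ι => (b i).1 τ ≠ 0)).card = 1 := by
    intro τ hτ
    have hone : ∀ y : ZMod 2, y ≠ 0 → y = 1 := by decide
    have hval : s.1 τ = ((Finset.univ.filter (fun i : ι => (b i).1 τ ≠ 0)).card : ZMod 2) := by
      rw [hsval τ, ← Finset.sum_filter_of_ne (fun i _ h => h)]
      rw [Finset.sum_congr rfl (fun i hi => hone _ (Finset.mem_filter.mp hi).2)]
      rw [Finset.sum_const, nsmul_eq_mul, mul_one]
    rw [hval] at hτ
    have hle2 := hb2 τ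
    set n := (Finset.univ.filter (fun i : ι => (b i).1 τ ≠ 0)).card with hn
    interval_cases n
    · exact absurd (by norm_num) hτ
    · rfl
    · exact absurd (by decide : ((2 : ℕ) : ZMod 2) = 0) hτ
  -- Fubini
  have hT : (∑ i : ι, suppCard ((b i).1))
      = ∑ τ : {σ // σ ∈ L.facesDim e},
          (Finset.univ.filter (fun i : ι => (b i).1 τ ≠ 0)).card := by
    unfold suppCard
    simp_rw [Finset.card_filter]
    rw [Finset.sum_comm]
  have hTlow : (e + 2) * Fintype.card ι ≤ ∑ i : ι, suppCard ((b i).1) := by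
    calc (e + 2) * Fintype.card ι = ∑ _i : ι, (e + 2) := by
          rw [Finset.sum_const, Finset.card_univ, smul_eq_mul, Nat.mul_comm]
      _ ≤ _ := Finset.sum_le_sum (fun i _ => hsupp i)
  have hsuppsub : suppCard (s.1) ≤ (Finset.univ.filter
      (fun τ : {σ // σ ∈ L.facesDim e} =>
        (Finset.univ.filter (fun i : ι => (b i).1 τ ≠ 0)).card = 1)).card := by
    apply Finset.card_le_card
    intro τ hτ
    have h1 := (Finset.mem_filter.mp hτ).2
    exact Finset.mem_filter.mpr ⟨Finset.mem_univ _, hcov1 τ h1⟩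
  have hcF : (Finset.univ : Finset {σ // σ ∈ L.facesDim e}).card = L.fnum e := by
    rw [Finset.card_univ, fnum]
    exact Fintype.card_of_subtype (L.facesDim e) (fun x => Iff.rfl)
  have hmain : (∑ τ : {σ // σ ∈ L.facesDim e},
        (Finset.univ.filter (fun i : ι => (b i).1 τ ≠ 0)).card)
      + (Finset.univ.filter
          (fun τ : {σ // σ ∈ L.facesDim e} =>
            (Finset.univ.filter (fun i : ι => (b i).1 τ ≠ 0)).card = 1)).card
      ≤ 2 * L.fnum e := by
    rw [Finset.card_filter, ← Finset.sum_add_distrib]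
    calc (∑ τ : {σ // σ ∈ L.facesDim e},
          ((Finset.univ.filter (fun i : ι => (b i).1 τ ≠ 0)).card
            + if (Finset.univ.filter (fun i : ι => (b i).1 τ ≠ 0)).card = 1 then 1 else 0))
        ≤ ∑ _τ : {σ // σ ∈ L.facesDim e}, 2 :=
          Finset.sum_le_sum (fun τ _ => by have := hb2 τ; split <;> omega)
      _ = 2 * L.fnum e := by
          rw [Finset.sum_const, smul_eq_mul, hcF, Nat.mul_comm]
  -- put everything together
  calc (e + 2) * (Module.finrank (ZMod 2) (LinearMap.ker (L.boundary e)) + 1)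
      = (e + 2) * Fintype.card ι + (e + 2) := by rw [hcardι]; ring
    _ ≤ (∑ i : ι, suppCard ((b i).1)) + suppCard (s.1) := Nat.add_le_add hTlow hsupps
    _ ≤ 2 * L.fnum e := by rw [hT]; exact le_trans (Nat.add_le_add_left hsuppsub _) hmain

end SComplex

open SComplex
/-- Corollary 8. -/
theorem cor8 {V : Type} [DecidableEq V] [Fintype V] (d : ℕ) (hd : 1 ≤ d)
    (K : SComplex V) (hdim : K.IsDim d) (hβ : K.betti d = 0)
    (hcb : (K.skeleton (d - 1)).HasCompleteBasis (d - 1) 2) :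
    (d + 1) * (K.fnum d + 1) ≤ 2 * K.fnum (d - 1) := by
  have hker : LinearMap.ker (K.boundary d) = ⊥ := SComplex.ker_top_eq_bot K hdim hβ
  have hfd : 1 ≤ K.fnum d := by
    obtain ⟨σ0, h1, h2⟩ := hdim.2
    exact Finset.card_pos.mpr ⟨σ0, SComplex.mem_facesDim.mpr ⟨h1, h2⟩⟩
  by_cases hd1 : d = 1
  · subst hd1
    have h := SComplex.case_d1 K hker
    show (1 + 1) * (K.fnum 1 + 1) ≤ 2 * K.fnum 0
    omega
  · have hd2 : 2 ≤ d := by omega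
    obtain ⟨ι, hι, b, hb2⟩ := hcb
    have hN : K.fnum d ≤ Module.finrank (ZMod 2)
        (LinearMap.ker ((K.skeleton (d - 1)).boundary (d - 1))) :=
      SComplex.fd_le_rank K hd hker
    have hcount := SComplex.main_count (K.skeleton (d - 1)) (d - 1)
      (by omega : 1 ≤ d - 1) ι (hFι := hι) b hb2 (by omega)
    have he2 : d - 1 + 2 = d + 1 := by omega
    rw [he2] at hcount
    have hfnum : (K.skeleton (d - 1)).fnum (d - 1) = K.fnum (d - 1) :=
      congrArg Finset.card (SComplex.skeleton_facesDim K (d - 1))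
    rw [hfnum] at hcount
    calc (d + 1) * (K.fnum d + 1)
        ≤ (d + 1) * (Module.finrank (ZMod 2)
            (LinearMap.ker ((K.skeleton (d - 1)).boundary (d - 1))) + 1) :=
          Nat.mul_le_mul_left _ (by omega)
      _ ≤ 2 * K.fnum (d - 1) := hcount
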